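/- Suppose φ̄ : (Fin n → ℝ) → ℝ is differentiable and satisfies the steady-state HJB equation with state cost m, i.e. for all x: ∇φ̄(x) ⬝ᵥ f(x) − (1/4)·((g x)ᵀ.mulVec (∇φ̄ x)) ⬝ᵥ (R⁻¹.mulVec ((g x)ᵀ.mulVec (∇φ̄ x))) + m(x) = 0. Let ε > 0, define the scaled feedback u_ε(y) := (1/2 + ε)·(−(1/2)·R⁻¹.mulVec ((g y)ᵀ.mulVec (∇φ̄ y))), and let x : ℝ → (Fin n → ℝ) be differentiable and solve x'(t) = f(x(t)) + (g (x t)).mulVec (u_ε (x t)) for all t. Then for every t, the composite t ↦ φ̄(x(t)) has derivative at t equal to −m(x(t)) − (ε/2)·‖R⁻¹.mulVec ((g (x t))ᵀ.mulVec (∇φ̄ (x t)))‖²_R. In particular, if m(y) ≥ 0 for all y, this derivative is ≤ 0 for all t. -/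

import Mathlib

open Matrix

/-- Euclidean gradient of a scalar function on `Fin n → ℝ`:
the vector of partial derivatives. -/
noncomputable def grad {n : ℕ} (φ : (Fin n → ℝ) → ℝ) (x : Fin n → ℝ) : Fin n → ℝ :=
  fun i => fderiv ℝ φ x (Pi.single i 1)

/-- `R`-weighted squared norm `‖u‖²_R = u ⬝ᵥ R.mulVec u`. -/
def sqR {p : ℕ} (R : Matrix (Fin p) (Fin p) ℝ) (u : Fin p → ℝ) : ℝ :=
  u ⬝ᵥ R.mulVec u

theorem stmt_10 {n p : ℕ}
    (f : (Fin n → ℝ) → (Fin n → ℝ))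
    (g : (Fin n → ℝ) → Matrix (Fin n) (Fin p) ℝ)
    (R : Matrix (Fin p) (Fin p) ℝ)
    (hRsymm : R.IsSymm) (hRpd : R.PosDef)
    (m : (Fin n → ℝ) → ℝ)
    (φb : (Fin n → ℝ) → ℝ)
    (hφ : Differentiable ℝ φb)
    (hHJB : ∀ x, grad φb x ⬝ᵥ f x
        - (1/4) * ((g x)ᵀ.mulVec (grad φb x) ⬝ᵥ R⁻¹.mulVec ((g x)ᵀ.mulVec (grad φb x)))
        + m x = 0)
    (ε : ℝ) (hε : 0 < ε)
    (uε : (Fin n → ℝ) → (Fin p → ℝ))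
    (huε : ∀ y, uε y = (1/2 + ε) • (-(1/2 : ℝ) • R⁻¹.mulVec ((g y)ᵀ.mulVec (grad φb y))))
    (x : ℝ → (Fin n → ℝ))
    (hx : ∀ t, HasDerivAt x (f (x t) + (g (x t)).mulVec (uε (x t))) t) :
    ∀ t, HasDerivAt (fun s => φb (x s))
        (-(m (x t)) - (ε/2) * sqR R (R⁻¹.mulVec ((g (x t))ᵀ.mulVec (grad φb (x t))))) t
      ∧ ((∀ y, 0 ≤ m y) →
          -(m (x t)) - (ε/2) * sqR R (R⁻¹.mulVec ((g (x t))ᵀ.mulVec (grad φb (x t)))) ≤ 0) := by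
  intro t
  set X := x t with hX
  set w : Fin p → ℝ := (g X)ᵀ.mulVec (grad φb X) with hw
  set q : ℝ := w ⬝ᵥ R⁻¹.mulVec w with hq
  have hdet : IsUnit R.det := isUnit_iff_ne_zero.mpr hRpd.det_pos.ne'
  have hRR : R.mulVec (R⁻¹.mulVec w) = w := by
    rw [Matrix.mulVec_mulVec, Matrix.mul_nonsing_inv R hdet, Matrix.one_mulVec]
  have hsq : sqR R (R⁻¹.mulVec w) = q := by
    rw [sqR, hRR, hq, dotProduct_comm]
  have hqnn : 0 ≤ q := by
    have := (hRpd.inv.posSemidef).re_dotProduct_nonneg (x := w)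
    simpa [hq] using this
  -- gradient gives fderiv via dot product
  have hgradv : ∀ v : Fin n → ℝ, fderiv ℝ φb X v = grad φb X ⬝ᵥ v := by
    intro v
    have hv : v = ∑ i, v i • (Pi.single i 1 : Fin n → ℝ) := by
      funext j; simp [Finset.sum_apply, Pi.single_apply]
    conv_lhs => rw [hv]
    rw [map_sum]
    simp [grad, dotProduct, mul_comm]
  have hcomp : HasDerivAt (fun s => φb (x s))
      (fderiv ℝ φb X (f X + (g X).mulVec (uε X))) t :=
    (hφ X).hasFDerivAt.comp_hasDerivAt t (hx t)
  have hval : fderiv ℝ φb X (f X + (g X).mulVec (uε X))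
      = -(m X) - (ε/2) * q := by
    rw [hgradv, dotProduct_add]
    have h2 : grad φb X ⬝ᵥ (g X).mulVec (uε X) = -(1/4 + ε/2) * q := by
      rw [Matrix.dotProduct_mulVec, ← Matrix.mulVec_transpose, ← hw, huε, hq]
      rw [smul_smul, dotProduct_smul]
      ring_nf
      rw [← hw]
      ring
    have h1 : grad φb X ⬝ᵥ f X = (1/4) * q - m X := by
      have := hHJB X
      rw [← hw, ← hq] at this
      linarith
    rw [h1, h2]; ring
  rw [hsq]
  refine ⟨hval ▸ hcomp, fun hm => ?_⟩
  have := hm X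
  nlinarith
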